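/- Let m ≥ 1, let D ⊂ ℝ^m be bounded, ρ ∈ (0,∞)^m, and let (Ψ_n)_{n≥1} be analytic maps on the complex domain D_ρ with values in ℂ^m, defining the one-parameter family of formal diffeomorphisms Ψ(x,μ) = x + Σ_{n≥1} Ψ_n(x) μⁿ. Then there exists a sequence (F_n)_{n≥1} of analytic vector fields on D_ρ such that, defining L_{1,n} = F_n and L_{m,n} = Σ_{j=1}^{n−m+1} L_{F_j} L_{m−1,n−j} for 2 ≤ m ≤ n (where L_F G = (DG)·F is the Lie derivative of G along F), one has for every k ≥ 1: Σ_{n=1}^{k} (1/n!) L_{n,k}(x) = Ψ_k(x) for all x ∈ D_ρ. Equivalently, the formal time-1 flow e^{L_{F_μ}}(x) = x + Σ_{n≥1}(1/n!) L_{F_μ}ⁿ(x) of the formal vector field F_μ = Σ_{n≥1} F_n μⁿ coincides with Ψ(x,μ) order by order in μ. -/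

import Mathlib

open Real Filter Set Classical

noncomputable section

/-- The complex neighbourhood `D_ρ = ⋃_{x∈D} {z ∈ ℂ^m : |z_i − x_i| < ρ_i}` of a set
`D ⊂ ℝ^m`. -/
def cplxNbhd (m : ℕ) (D : Set (Fin m → ℝ)) (ρ : Fin m → ℝ) : Set (Fin m → ℂ) :=
  ⋃ x ∈ D, {z : Fin m → ℂ | ∀ i, ‖z i - (x i : ℂ)‖ < ρ i}

/-- The Lie derivative `L_F G = (DG)·F` of a map `G` along a vector field `F`. -/
def lieD {m : ℕ} (F G : (Fin m → ℂ) → (Fin m → ℂ)) : (Fin m → ℂ) → (Fin m → ℂ) :=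
  fun z => fderiv ℂ G z (F z)

/-- The iterated Lie derivatives `L_{M,n}` associated with a sequence `F` of vector fields:
`L_{0,n} = 0`, `L_{1,n} = F_n` and `L_{M,n} = Σ_{j=1}^{n−M+1} L_{F_j} L_{M−1,n−j}` for `M ≥ 2`. -/
def myL {m : ℕ} (F : ℕ → (Fin m → ℂ) → (Fin m → ℂ)) : ℕ → ℕ → (Fin m → ℂ) → (Fin m → ℂ)
  | 0, _ => 0
  | 1, n => F n
  | (M+2), n => fun z => ∑ j ∈ Finset.Icc 1 (n - (M+2) + 1), lieD (F j) (myL F (M+1) (n - j)) z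

/-- `L_{M,n}` only depends on the vector fields `F_j` with `j ≤ n - M + 1`. -/
lemma myL_congr {m : ℕ} {F F' : ℕ → (Fin m → ℂ) → (Fin m → ℂ)} :
    ∀ M n, (∀ j, j ≤ n - M + 1 → F j = F' j) → myL F M n = myL F' M n := by
  intro M
  induction M using Nat.strong_induction_on with
  | _ M ih =>
    match M with
    | 0 => intro n _; rfl
    | 1 => intro n h; exact h n (by omega)
    | (M+2) =>
      intro n h
      show (fun z => _) = (fun z => _)
      funext z
      refine Finset.sum_congr rfl ?_
      intro j hj
      simp only [Finset.mem_Icc] at hj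
      rw [h j (by omega), ih (M+1) (by omega) (n - j) ?_]
      intro j' hj'
      exact h j' (by omega)

/-- The Lie derivative of an analytic map along an analytic vector field is analytic. -/
lemma lieD_analytic {m : ℕ} {F G : (Fin m → ℂ) → (Fin m → ℂ)} {s : Set (Fin m → ℂ)}
    (hF : AnalyticOnNhd ℂ F s) (hG : AnalyticOnNhd ℂ G s) :
    AnalyticOnNhd ℂ (lieD F G) s := by
  intro z hz
  have h1 : AnalyticAt ℂ (fderiv ℂ G) z := hG.fderiv z hz
  have h2 : AnalyticAt ℂ F z := hF z hz
  have happ : AnalyticAt ℂ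
      (fun p : ((Fin m → ℂ) →L[ℂ] (Fin m → ℂ)) × (Fin m → ℂ) => p.1 p.2)
      (fderiv ℂ G z, F z) :=
    (ContinuousLinearMap.apply ℂ (Fin m → ℂ)).flip.analyticAt_bilinear _
  exact happ.comp₂ h1 h2

/-- `L_{M,n}` is analytic provided the `F_j`, `1 ≤ j ≤ n - M + 1`, are analytic. -/
lemma myL_analytic {m : ℕ} {F : ℕ → (Fin m → ℂ) → (Fin m → ℂ)} {s : Set (Fin m → ℂ)} :
    ∀ M n, 1 ≤ M → M ≤ n →
      (∀ j, 1 ≤ j → j ≤ n - M + 1 → AnalyticOnNhd ℂ (F j) s) →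
      AnalyticOnNhd ℂ (myL F M n) s := by
  intro M
  induction M using Nat.strong_induction_on with
  | _ M ih =>
    match M with
    | 0 => intro n h; omega
    | 1 => intro n _ hn hF; exact hF n (by omega) (by omega)
    | (M+2) =>
      intro n _ hMn hF
      show AnalyticOnNhd ℂ (fun z => ∑ j ∈ Finset.Icc 1 (n - (M+2) + 1),
        lieD (F j) (myL F (M+1) (n - j)) z) s
      refine Finset.analyticOnNhd_fun_sum _ ?_
      intro j hj
      simp only [Finset.mem_Icc] at hj
      refine lieD_analytic (hF j hj.1 (by omega)) ?_
      refine ih (M+1) (by omega) (n - j) (by omega) (by omega) ?_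
      intro j' h1 h2
      exact hF j' h1 (by omega)

/-- The recursively defined interpolating vector fields:
`F_k = Ψ_k − Σ_{n=2}^{k} (1/n!) L_{n,k}`, where `L_{n,k}` only involves `F_j` with `j < k`. -/
def myF {m : ℕ} (Ψ : ℕ → (Fin m → ℂ) → (Fin m → ℂ)) (k : ℕ) : (Fin m → ℂ) → (Fin m → ℂ) :=
  Ψ k - ∑ n ∈ Finset.Icc 2 k, (1 / (n.factorial : ℂ)) •
    myL (fun j => if h : j < k then myF Ψ j else 0) n k
termination_by k
decreasing_by exact h

/-- The defining recursion of `myF`, rewritten without the truncation. -/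
lemma myF_eq {m : ℕ} (Ψ : ℕ → (Fin m → ℂ) → (Fin m → ℂ)) (k : ℕ) :
    myF Ψ k = Ψ k - ∑ n ∈ Finset.Icc 2 k, (1 / (n.factorial : ℂ)) • myL (myF Ψ) n k := by
  rw [myF]
  congr 1
  refine Finset.sum_congr rfl ?_
  intro n hn
  simp only [Finset.mem_Icc] at hn
  congr 1
  refine myL_congr n k ?_
  intro j hj
  have : j < k := by omega
  simp [this]

/-- Formal interpolation of a one-parameter family of diffeomorphisms
`Ψ(x,μ) = x + Σ_{n≥1} Ψ_n(x) μⁿ` by a formal vector field `F_μ = Σ_{n≥1} F_n μⁿ`: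
there are analytic vector fields `F_n` on `D_ρ` such that, with
`L_{1,n} = F_n` and `L_{m,n} = Σ_{j=1}^{n−m+1} L_{F_j} L_{m−1,n−j}` for `2 ≤ m ≤ n`,
one has `Σ_{n=1}^{k} (1/n!) L_{n,k} = Ψ_k` on `D_ρ` for every `k ≥ 1`; i.e. the formal
time-1 flow of `F_μ` coincides with `Ψ(·,μ)` order by order in `μ`. -/
theorem formal_interpolating_vector_field
    (m : ℕ) (hm : 1 ≤ m) (D : Set (Fin m → ℝ)) (hD : Bornology.IsBounded D)
    (ρ : Fin m → ℝ) (hρ : ∀ i, 0 < ρ i)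
    (Ψ : ℕ → (Fin m → ℂ) → (Fin m → ℂ))
    (hΨ : ∀ n : ℕ, 1 ≤ n → AnalyticOnNhd ℂ (Ψ n) (cplxNbhd m D ρ)) :
    ∃ F : ℕ → (Fin m → ℂ) → (Fin m → ℂ),
      (∀ n : ℕ, 1 ≤ n → AnalyticOnNhd ℂ (F n) (cplxNbhd m D ρ)) ∧
      ∃ L : ℕ → ℕ → (Fin m → ℂ) → (Fin m → ℂ),
        (∀ n : ℕ, L 1 n = F n) ∧
        (∀ M n : ℕ, 2 ≤ M → M ≤ n →
          L M n = fun z => ∑ j ∈ Finset.Icc 1 (n - M + 1),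
            lieD (F j) (L (M - 1) (n - j)) z) ∧
        (∀ k : ℕ, 1 ≤ k → ∀ z ∈ cplxNbhd m D ρ,
          ∑ n ∈ Finset.Icc 1 k, (1 / (n.factorial : ℂ)) • L n k z = Ψ k z) := by
  refine ⟨myF Ψ, ?_, myL (myF Ψ), fun n => rfl, ?_, ?_⟩
  · -- analyticity, by strong induction on `k`
    intro k
    induction k using Nat.strong_induction_on with
    | _ k ih =>
      intro hk
      rw [myF_eq]
      refine AnalyticOnNhd.sub (hΨ k hk) ?_
      have : AnalyticOnNhd ℂ (fun z => ∑ n ∈ Finset.Icc 2 k,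
          ((1 / (n.factorial : ℂ)) • myL (myF Ψ) n k) z) (cplxNbhd m D ρ) := by
        refine Finset.analyticOnNhd_fun_sum _ ?_
        intro n hn
        simp only [Finset.mem_Icc] at hn
        have hL : AnalyticOnNhd ℂ (myL (myF Ψ) n k) (cplxNbhd m D ρ) := by
          refine myL_analytic n k (by omega) (by omega) ?_
          intro j h1 h2
          exact ih j (by omega) h1
        intro z hz
        exact (analyticAt_const (v := (1 / (n.factorial : ℂ)))).smul (hL z hz)
      convert this using 1
      funext z
      simp
  · -- the recurrence defining `L_{M,n}`
    intro M n hM _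
    obtain ⟨M', rfl⟩ : ∃ M', M = M' + 2 := ⟨M - 2, by omega⟩
    rfl
  · -- the interpolation identity `Σ_{n=1}^{k} (1/n!) L_{n,k} = Ψ_k`
    intro k hk z _
    have hsplit : Finset.Icc 1 k = insert 1 (Finset.Icc 2 k) := by
      ext j; simp only [Finset.mem_Icc, Finset.mem_insert]; omega
    rw [hsplit, Finset.sum_insert (by simp)]
    have h1 : myL (myF Ψ) 1 k z = myF Ψ k z := rfl
    have hF := congrFun (myF_eq Ψ k) z
    simp only [Pi.sub_apply, Finset.sum_apply, Pi.smul_apply] at hF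
    simp only [Nat.factorial_one, Nat.cast_one, h1, hF]
    simp [sub_add_cancel]
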